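/- Let (M,d) be a homogeneous metric space of polynomial growth. Then the group Iso(M,d), and also its identity component, is of polynomial growth: there exist a compact neighbourhood U of the identity, and constants C', Q' such that μ(Uⁿ) ≤ C'·nᵠ' for all positive integers n, where μ is a left Haar measure on the group. -/

import Mathlib

open Pointwise MeasureTheory Set Topology Filter ENNReal

namespace Stmt19

variable {M : Type*} [MetricSpace M]

/-! ### Topology on the isometry group -/

/-- The topology of pointwise convergence on the isometry group. -/
def isoTop (M : Type*) [MetricSpace M] : TopologicalSpace (M ≃ᵢ M) :=
  TopologicalSpace.induced (fun f : M ≃ᵢ M => (⇑f : M → M)) Pi.topologicalSpace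

theorem coe_injective : Function.Injective (fun f : M ≃ᵢ M => (⇑f : M → M)) := by
  intro f g h; ext x; exact congrFun h x

theorem isoEmbedding : @Topology.IsEmbedding (M ≃ᵢ M) (M → M) (isoTop M) _
    (fun f : M ≃ᵢ M => (⇑f : M → M)) := by
  letI := isoTop M
  exact { eq_induced := rfl, injective := coe_injective }

theorem continuous_coeFn : @Continuous (M ≃ᵢ M) (M → M) (isoTop M) _
    (fun f : M ≃ᵢ M => (⇑f : M → M)) := by
  letI := isoTop M
  exact continuous_induced_dom

theorem continuous_eval (x : M) : @Continuous (M ≃ᵢ M) M (isoTop M) _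
    (fun f : M ≃ᵢ M => f x) := by
  letI := isoTop M
  exact (continuous_apply x).comp continuous_coeFn

theorem isoT2 : @T2Space (M ≃ᵢ M) (isoTop M) := by
  letI := isoTop M
  exact isoEmbedding.t2Space

theorem isoTopologicalGroup : @IsTopologicalGroup (M ≃ᵢ M) (isoTop M) _ := by
  letI := isoTop M
  refine { toContinuousMul := ⟨?_⟩, toContinuousInv := ⟨?_⟩ }
  · -- continuity of multiplication
    apply continuous_induced_rng.2
    apply continuous_pi
    intro x
    rw [continuous_iff_continuousAt]
    rintro ⟨f₀, g₀⟩
    rw [ContinuousAt]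
    apply Metric.tendsto_nhds.2
    intro ε hε
    have hS : {p : (M ≃ᵢ M) × (M ≃ᵢ M) |
        dist (p.2 x) (g₀ x) < ε / 2 ∧ dist (p.1 (g₀ x)) (f₀ (g₀ x)) < ε / 2} ∈
        nhds (f₀, g₀) := by
      apply IsOpen.mem_nhds
      · apply IsOpen.inter
        · exact isOpen_lt (continuous_dist.comp
            (((continuous_eval x).comp continuous_snd).prodMk continuous_const)) continuous_const
        · exact isOpen_lt (continuous_dist.comp
            (((continuous_eval (g₀ x)).comp continuous_fst).prodMk continuous_const))
            continuous_const
      · constructor <;> simpa using half_pos hε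
    filter_upwards [hS] with p hp
    have h1 : dist (p.1 (p.2 x)) (p.1 (g₀ x)) = dist (p.2 x) (g₀ x) := p.1.dist_eq _ _
    calc dist ((p.1 * p.2) x) ((f₀ * g₀) x)
        ≤ dist (p.1 (p.2 x)) (p.1 (g₀ x)) + dist (p.1 (g₀ x)) (f₀ (g₀ x)) := dist_triangle _ _ _
      _ < ε / 2 + ε / 2 := by rw [h1]; exact add_lt_add hp.1 hp.2
      _ = ε := add_halves ε
  · -- continuity of inversion
    apply continuous_induced_rng.2
    apply continuous_pi
    intro x
    rw [continuous_iff_continuousAt]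
    intro g₀
    rw [ContinuousAt]
    apply Metric.tendsto_nhds.2
    intro ε hε
    have hS : {g : M ≃ᵢ M | dist (g (g₀.symm x)) x < ε} ∈ nhds g₀ := by
      apply IsOpen.mem_nhds
      · exact isOpen_lt (continuous_dist.comp
          ((continuous_eval (g₀.symm x)).prodMk continuous_const)) continuous_const
      · simpa using hε
    filter_upwards [hS] with g hg
    have key : dist (g⁻¹ x) (g₀⁻¹ x) = dist x (g (g₀.symm x)) := by
      have h2 := g.dist_eq (g.symm x) (g₀.symm x)
      simp only [IsometryEquiv.apply_symm_apply] at h2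
      calc dist (g⁻¹ x) (g₀⁻¹ x) = dist (g.symm x) (g₀.symm x) := rfl
        _ = dist x (g (g₀.symm x)) := h2.symm
    show dist (g⁻¹ x) (g₀⁻¹ x) < ε
    rw [key, dist_comm]
    exact hg

/-! ### Chains and towers of compact sets -/

/-- Points reachable from `o` by chains of steps `≤ ε/2`. -/
def chain (o : M) (ε : ℝ) : ℕ → Set M
  | 0 => {o}
  | n + 1 => {y | ∃ z ∈ chain o ε n, dist z y ≤ ε / 2}

theorem chain_univ [ConnectedSpace M] (o : M) {ε : ℝ} (hε : 0 < ε) :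
    (⋃ n, chain o ε n) = univ := by
  have hmem : ∀ n z y, z ∈ chain o ε n → dist z y ≤ ε / 2 → y ∈ chain o ε (n + 1) :=
    fun n z y hz hd => ⟨z, hz, hd⟩
  apply IsClopen.eq_univ
  · constructor
    · -- closed
      rw [← isOpen_compl_iff, Metric.isOpen_iff]
      intro x hx
      refine ⟨ε / 2, by linarith, fun y hy hyS => hx ?_⟩
      obtain ⟨n, hn⟩ := mem_iUnion.1 hyS
      refine mem_iUnion.2 ⟨n + 1, hmem n y x hn ?_⟩
      have : dist y x < ε / 2 := Metric.mem_ball.1 hy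
      linarith
    · rw [Metric.isOpen_iff]
      rintro x hx
      obtain ⟨n, hn⟩ := mem_iUnion.1 hx
      refine ⟨ε / 2, by linarith, fun y hy => ?_⟩
      refine mem_iUnion.2 ⟨n + 1, hmem n x y hn ?_⟩
      have : dist y x < ε / 2 := Metric.mem_ball.1 hy
      rw [dist_comm]
      linarith
  · exact ⟨o, mem_iUnion.2 ⟨0, rfl⟩⟩

theorem exists_tower (o : M) {ε : ℝ} (hε : 0 < ε)
    (hcomp : ∀ x : M, IsCompact (Metric.closedBall x ε)) :
    ∃ T : ℕ → Set M, (∀ n, IsCompact (T n)) ∧ Metric.closedBall o (ε / 2) ⊆ T 0 ∧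
      ∀ n y z, z ∈ T n → dist z y ≤ ε / 2 → y ∈ T (n + 1) := by
  have step : ∀ K : Set M, IsCompact K →
      ∃ K' : Set M, IsCompact K' ∧ ∀ y z, z ∈ K → dist z y ≤ ε / 2 → y ∈ K' := by
    intro K hK
    obtain ⟨t, hts, ht⟩ := hK.elim_nhds_subcover (fun z => Metric.ball z (ε / 2))
      (fun z _ => Metric.ball_mem_nhds z (by linarith))
    refine ⟨⋃ z ∈ t, Metric.closedBall z ε, t.finite_toSet.isCompact_biUnion
      (fun z _ => hcomp z), fun y z hz hd => ?_⟩
    obtain ⟨w, hw, hzw⟩ := mem_iUnion₂.1 (ht hz)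
    refine mem_iUnion₂.2 ⟨w, hw, ?_⟩
    rw [Metric.mem_closedBall]
    have h1 : dist z w < ε / 2 := Metric.mem_ball.1 hzw
    calc dist y w ≤ dist y z + dist z w := dist_triangle _ _ _
      _ ≤ ε / 2 + ε / 2 := by rw [dist_comm y z]; exact add_le_add hd h1.le
      _ = ε := by ring
  have h0 : IsCompact (Metric.closedBall o (ε / 2)) :=
    (hcomp o).of_isClosed_subset Metric.isClosed_closedBall
      (Metric.closedBall_subset_closedBall (by linarith))
  set T : ℕ → {K : Set M // IsCompact K} := fun n =>
    Nat.rec ⟨Metric.closedBall o (ε / 2), h0⟩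
      (fun _ p => ⟨(step p.1 p.2).choose, (step p.1 p.2).choose_spec.1⟩) n with hT
  exact ⟨fun n => (T n).1, fun n => (T n).2, subset_rfl,
    fun n y z hz hd => (step (T n).1 (T n).2).choose_spec.2 y z hz hd⟩

theorem chain_subset_tower (o : M) {ε : ℝ} {T : ℕ → Set M}
    (h0 : Metric.closedBall o (ε / 2) ⊆ T 0) (hε : 0 < ε)
    (hstep : ∀ n y z, z ∈ T n → dist z y ≤ ε / 2 → y ∈ T (n + 1)) :
    ∀ n, chain o ε n ⊆ T n := by
  intro n
  induction n with
  | zero => rintro x rfl; exact h0 (Metric.mem_closedBall_self (by linarith))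
  | succ n ih => rintro x ⟨z, hz, hd⟩; exact hstep n x z (ih hz) hd

theorem isom_maps_chain (o : M) {ε : ℝ} {T : ℕ → Set M}
    (h0 : Metric.closedBall o (ε / 2) ⊆ T 0)
    (hstep : ∀ n y z, z ∈ T n → dist z y ≤ ε / 2 → y ∈ T (n + 1))
    (g : M ≃ᵢ M) (hg : dist (g o) o ≤ ε / 2) :
    ∀ n, ∀ x ∈ chain o ε n, g x ∈ T n := by
  intro n
  induction n with
  | zero => rintro x rfl; exact h0 (by simpa [Metric.mem_closedBall] using hg)
  | succ n ih =>
      rintro x ⟨z, hz, hd⟩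
      exact hstep n (g x) (g z) (ih z hz) (by rwa [g.dist_eq])

theorem exists_pointwise_bound [ConnectedSpace M] (o : M) {ε : ℝ} (hε : 0 < ε)
    (hcomp : ∀ x : M, IsCompact (Metric.closedBall x ε)) :
    ∀ x : M, ∃ K : Set M, IsCompact K ∧
      ∀ g : M ≃ᵢ M, dist (g o) o ≤ ε / 2 → g x ∈ K := by
  obtain ⟨T, hTc, hT0, hTstep⟩ := exists_tower o hε hcomp
  intro x
  have hx : x ∈ ⋃ n, chain o ε n := by rw [chain_univ o hε]; trivial
  obtain ⟨n, hn⟩ := mem_iUnion.1 hx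
  exact ⟨T n, hTc n, fun g hg => isom_maps_chain o hT0 hTstep g hg n x hn⟩

theorem sigma_compact_cover [ConnectedSpace M] (o : M) {ε : ℝ} (hε : 0 < ε)
    (hcomp : ∀ x : M, IsCompact (Metric.closedBall x ε)) :
    ∃ T : ℕ → Set M, (∀ n, IsCompact (T n)) ∧ (⋃ n, T n) = univ := by
  obtain ⟨T, hTc, hT0, hTstep⟩ := exists_tower o hε hcomp
  refine ⟨T, hTc, ?_⟩
  apply eq_univ_of_univ_subset
  rw [← chain_univ o hε]
  exact iUnion_mono (chain_subset_tower o hT0 hε hTstep)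

/-! ### Compactness of the set of isometries with small displacement -/

theorem isCompact_V [ConnectedSpace M] (o : M) {ε : ℝ} (hε : 0 < ε)
    (hall : ∀ x : M, ∃ K : Set M, IsCompact K ∧
      ∀ g : M ≃ᵢ M, dist (g o) o ≤ ε / 2 → g x ∈ K) :
    @IsCompact _ (isoTop M) {g : M ≃ᵢ M | dist (g o) o ≤ ε / 2} := by
  letI := isoTop M
  choose T hTc hT using hall
  rw [isCompact_iff_ultrafilter_le_nhds]
  intro F hF
  have hV : {g : M ≃ᵢ M | dist (g o) o ≤ ε / 2} ∈ F := Filter.le_principal_iff.1 hF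
  have hVinv : ∀ g : M ≃ᵢ M, dist (g o) o ≤ ε / 2 → dist (g⁻¹ o) o ≤ ε / 2 := by
    intro g hg
    have h1 : dist (g⁻¹ o) o = dist (g (g⁻¹ o)) (g o) := (g.dist_eq _ _).symm
    rw [h1, IsometryEquiv.apply_inv_self, dist_comm]
    exact hg
  have hu : ∀ x : M, ∃ a, Filter.Tendsto (fun g : M ≃ᵢ M => g x) F (𝓝 a) := by
    intro x
    have hmemF : {g : M ≃ᵢ M | g x ∈ T x} ∈ F :=
      mem_of_superset hV (fun g hg => hT x g hg)
    obtain ⟨a, _, ha⟩ := (hTc x).ultrafilter_le_nhds (F.map (fun g : M ≃ᵢ M => g x))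
      (by rwa [Ultrafilter.coe_map, Filter.le_principal_iff, Filter.mem_map])
    exact ⟨a, by rwa [Filter.Tendsto, ← Ultrafilter.coe_map]⟩
  have hw : ∀ x : M, ∃ a, Filter.Tendsto (fun g : M ≃ᵢ M => g⁻¹ x) F (𝓝 a) := by
    intro x
    have hmemF : {g : M ≃ᵢ M | g⁻¹ x ∈ T x} ∈ F :=
      mem_of_superset hV (fun g hg => hT x g⁻¹ (hVinv g hg))
    obtain ⟨a, _, ha⟩ := (hTc x).ultrafilter_le_nhds (F.map (fun g : M ≃ᵢ M => g⁻¹ x))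
      (by rwa [Ultrafilter.coe_map, Filter.le_principal_iff, Filter.mem_map])
    exact ⟨a, by rwa [Filter.Tendsto, ← Ultrafilter.coe_map]⟩
  choose u hu using hu
  choose w hw using hw
  have hdu : ∀ x y : M, dist (u x) (u y) = dist x y := by
    intro x y
    have h1 : Filter.Tendsto (fun g : M ≃ᵢ M => dist (g x) (g y)) F
        (𝓝 (dist (u x) (u y))) := (hu x).dist (hu y)
    have h2 : (fun g : M ≃ᵢ M => dist (g x) (g y)) = fun _ => dist x y :=
      funext fun g => g.dist_eq x y
    rw [h2] at h1
    exact tendsto_nhds_unique h1 tendsto_const_nhds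
  have huw : ∀ x : M, u (w x) = x := by
    intro x
    have h2 : Filter.Tendsto (fun g : M ≃ᵢ M => dist (g (w x)) x) F
        (𝓝 (dist (u (w x)) x)) := (hu (w x)).dist tendsto_const_nhds
    have h3 : (fun g : M ≃ᵢ M => dist (g (w x)) x) =
        fun g : M ≃ᵢ M => dist (w x) (g⁻¹ x) := by
      funext g
      rw [← g.dist_eq (w x) (g⁻¹ x), IsometryEquiv.apply_inv_self]
    rw [h3] at h2
    have h4 : Filter.Tendsto (fun g : M ≃ᵢ M => dist (w x) (g⁻¹ x)) F
        (𝓝 (dist (w x) (w x))) := tendsto_const_nhds.dist (hw x)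
    have h5 := tendsto_nhds_unique h2 h4
    rw [dist_self] at h5
    exact dist_eq_zero.1 h5
  have hwu : ∀ x : M, w (u x) = x := by
    intro x
    have h2 : Filter.Tendsto (fun g : M ≃ᵢ M => dist (g⁻¹ (u x)) x) F
        (𝓝 (dist (w (u x)) x)) := (hw (u x)).dist tendsto_const_nhds
    have h3 : (fun g : M ≃ᵢ M => dist (g⁻¹ (u x)) x) =
        fun g : M ≃ᵢ M => dist (u x) (g x) := by
      funext g
      rw [← g.dist_eq (g⁻¹ (u x)) x, IsometryEquiv.apply_inv_self]
    rw [h3] at h2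
    have h4 : Filter.Tendsto (fun g : M ≃ᵢ M => dist (u x) (g x)) F
        (𝓝 (dist (u x) (u x))) := tendsto_const_nhds.dist (hu x)
    have h5 := tendsto_nhds_unique h2 h4
    rw [dist_self] at h5
    exact dist_eq_zero.1 h5
  let e : M ≃ᵢ M := ⟨⟨u, w, hwu, huw⟩, Isometry.of_dist_eq hdu⟩
  refine ⟨e, ?_, ?_⟩
  · have h2 : Filter.Tendsto (fun g : M ≃ᵢ M => dist (g o) o) F
        (𝓝 (dist (u o) o)) := (hu o).dist tendsto_const_nhds
    exact le_of_tendsto h2 hV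
  · have h6 : Filter.Tendsto (fun g : M ≃ᵢ M => (⇑g : M → M)) F (𝓝 ⇑e) :=
      tendsto_pi_nhds.2 fun x => hu x
    show (F : Filter (M ≃ᵢ M)) ≤ @nhds _ (TopologicalSpace.induced
      (fun f : M ≃ᵢ M => (⇑f : M → M)) Pi.topologicalSpace) e
    rw [nhds_induced]
    exact Filter.map_le_iff_le_comap.1 h6

/-! ### V is a closed neighbourhood of 1 generating the group -/

theorem isClosed_V (o : M) (r : ℝ) :
    @IsClosed _ (isoTop M) {g : M ≃ᵢ M | dist (g o) o ≤ r} := by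
  letI := isoTop M
  exact isClosed_le ((continuous_eval o).dist continuous_const) continuous_const

theorem V_mem_nhds (o : M) {ε : ℝ} (hε : 0 < ε) :
    {g : M ≃ᵢ M | dist (g o) o ≤ ε / 2} ∈ @nhds _ (isoTop M) 1 := by
  letI := isoTop M
  apply mem_of_superset (IsOpen.mem_nhds (s := {g : M ≃ᵢ M | dist (g o) o < ε / 2}) ?_ ?_)
  · intro g hg
    have : dist (g o) o < ε / 2 := hg
    exact le_of_lt this
  · exact isOpen_lt ((continuous_eval o).dist continuous_const) continuous_const
  · show dist ((1 : M ≃ᵢ M) o) o < ε / 2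
    simp only [IsometryEquiv.coe_one, id_eq, dist_self]
    linarith

theorem closure_V_eq_top [ConnectedSpace M]
    (hhom : ∀ x y : M, ∃ f : M ≃ᵢ M, f x = y) (o : M) {ε : ℝ} (hε : 0 < ε) :
    Subgroup.closure {g : M ≃ᵢ M | dist (g o) o ≤ ε / 2} = ⊤ := by
  set V := {g : M ≃ᵢ M | dist (g o) o ≤ ε / 2} with hVdef
  set H := Subgroup.closure V with hHdef
  have key : ∀ z w : M, (∃ h ∈ H, h o = z) → dist z w ≤ ε / 2 → ∃ h ∈ H, h o = w := by
    rintro z w ⟨h, hH, rfl⟩ hd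
    obtain ⟨k, hk⟩ := hhom (h o) w
    have hc : h⁻¹ * k * h ∈ H := by
      apply Subgroup.subset_closure
      show dist ((h⁻¹ * k * h) o) o ≤ ε / 2
      have h1 : (h⁻¹ * k * h) o = h⁻¹ (k (h o)) := rfl
      rw [h1, hk]
      have h2 : dist (h⁻¹ w) o = dist w (h o) := by
        rw [← h.dist_eq (h⁻¹ w) o, IsometryEquiv.apply_inv_self]
      rw [h2, dist_comm]
      exact hd
    refine ⟨k * h, ?_, hk⟩
    have h3 : k * h = h * (h⁻¹ * k * h) := by group
    rw [h3]
    exact Subgroup.mul_mem _ hH hc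
  set S := {x : M | ∃ h ∈ H, h o = x} with hSdef
  have hSopen : IsOpen S := by
    rw [Metric.isOpen_iff]
    rintro x hx
    refine ⟨ε / 2, by linarith, fun y hy => ?_⟩
    have : dist y x < ε / 2 := Metric.mem_ball.1 hy
    exact key x y hx (by rw [dist_comm]; linarith)
  have hSclosed : IsClosed S := by
    rw [← isOpen_compl_iff, Metric.isOpen_iff]
    intro x hx
    refine ⟨ε / 2, by linarith, fun y hy hyS => hx ?_⟩
    have : dist y x < ε / 2 := Metric.mem_ball.1 hy
    exact key y x hyS (by linarith)
  have hSuniv : S = univ :=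
    IsClopen.eq_univ ⟨hSclosed, hSopen⟩ ⟨o, ⟨1, Subgroup.one_mem H, rfl⟩⟩
  rw [Subgroup.eq_top_iff']
  intro g
  have : g o ∈ S := by rw [hSuniv]; trivial
  obtain ⟨h, hH, hh⟩ := this
  have hV2 : h⁻¹ * g ∈ V := by
    show dist ((h⁻¹ * g) o) o ≤ ε / 2
    have h1 : (h⁻¹ * g) o = h⁻¹ (g o) := rfl
    have h2 : dist (h⁻¹ (g o)) o = dist (g o) (h o) := by
      rw [← h.dist_eq (h⁻¹ (g o)) o, IsometryEquiv.apply_inv_self]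
    rw [h1, h2, ← hh, dist_self]
    linarith
  have h4 : g = h * (h⁻¹ * g) := by group
  rw [h4]
  exact Subgroup.mul_mem _ hH (Subgroup.subset_closure hV2)

/-! ### Packing/net lemma -/

theorem exists_net [MeasurableSpace M] [BorelSpace M] (m : Measure M) (o : M)
    {R s : ℝ} (hs : 0 < s) (hR : 0 ≤ R)
    (hball : ∀ p : M, m (Metric.ball p (s / 2)) = m (Metric.ball o (s / 2)))
    (hfin : m (Metric.ball o (R + s)) < ⊤) (hpos : 0 < m (Metric.ball o (s / 2))) :
    ∃ P : Finset M, (∀ x ∈ Metric.closedBall o R, ∃ p ∈ P, dist x p < s) ∧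
      (P.card : ℝ≥0∞) * m (Metric.ball o (s / 2)) ≤ m (Metric.ball o (R + s)) := by
  set c := m (Metric.ball o (s / 2)) with hc
  set B := m (Metric.ball o (R + s)) with hB
  -- any separated finset satisfies the measure bound
  have hsep_bound : ∀ S : Finset M, (↑S ⊆ Metric.closedBall o R) →
      ((S : Set M).Pairwise fun p q => s ≤ dist p q) → (S.card : ℝ≥0∞) * c ≤ B := by
    intro S hsub hsep
    have hdisj : (S : Set M).PairwiseDisjoint fun p => Metric.ball p (s / 2) := by
      intro p hp q hq hpq
      apply Metric.ball_disjoint_ball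
      calc s / 2 + s / 2 = s := by ring
        _ ≤ dist p q := hsep hp hq hpq
    have hmeas : ∀ p ∈ S, MeasurableSet (Metric.ball p (s / 2)) := fun p _ =>
      Metric.isOpen_ball.measurableSet
    have hunion := measure_biUnion_finset (μ := m) hdisj hmeas
    have hsub2 : (⋃ p ∈ S, Metric.ball p (s / 2)) ⊆ Metric.ball o (R + s) := by
      intro x hx
      obtain ⟨p, hp, hxp⟩ := mem_iUnion₂.1 hx
      have h1 : dist x p < s / 2 := Metric.mem_ball.1 hxp
      have h2 : dist p o ≤ R := Metric.mem_closedBall.1 (hsub hp)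
      have : dist x o < R + s := by
        calc dist x o ≤ dist x p + dist p o := dist_triangle _ _ _
          _ < s / 2 + R := by linarith
          _ ≤ R + s := by linarith
      exact Metric.mem_ball.2 this
    calc (S.card : ℝ≥0∞) * c = ∑ p ∈ S, m (Metric.ball p (s / 2)) := by
          rw [Finset.sum_congr rfl fun p _ => hball p]
          simp [Finset.sum_const, nsmul_eq_mul]
      _ = m (⋃ p ∈ S, Metric.ball p (s / 2)) := hunion.symm
      _ ≤ B := measure_mono hsub2
  have hcfin : c ≠ ⊤ := by
    refine (lt_of_le_of_lt (measure_mono ?_) hfin).ne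
    exact Metric.ball_subset_ball (by linarith)
  -- uniform cardinality bound
  classical
  have hcard_le : ∀ S : Finset M, (↑S ⊆ Metric.closedBall o R) →
      ((S : Set M).Pairwise fun p q => s ≤ dist p q) → S.card ≤ ⌊(B / c).toReal⌋₊ := by
    intro S h1 h2
    have h3 : (S.card : ℝ≥0∞) ≤ B / c :=
      ENNReal.le_div_iff_mul_le (Or.inl hpos.ne') (Or.inl hcfin) |>.2 (hsep_bound S h1 h2)
    have h4 : B / c ≠ ⊤ := (ENNReal.div_lt_top hfin.ne hpos.ne').ne
    have h5 := ENNReal.toReal_mono h4 h3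
    simp only [ENNReal.toReal_natCast] at h5
    exact Nat.le_floor h5
  set 𝒞 : Set ℕ := {k : ℕ | ∃ S : Finset M, (↑S ⊆ Metric.closedBall o R) ∧
    ((S : Set M).Pairwise fun p q => s ≤ dist p q) ∧ S.card = k} with h𝒞
  have hne : 𝒞.Nonempty := ⟨0, ∅, by simp, by simp, rfl⟩
  have hbdd : BddAbove 𝒞 := by
    refine ⟨⌊(B / c).toReal⌋₊, fun k hk => ?_⟩
    obtain ⟨S, hS1, hS2, rfl⟩ := hk
    exact hcard_le S hS1 hS2
  obtain ⟨S, hS1, hS2, hScard⟩ : sSup 𝒞 ∈ 𝒞 := Nat.sSup_mem hne hbdd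
  refine ⟨S, ?_, hsep_bound S hS1 hS2⟩
  intro x hx
  by_contra hcon
  push_neg at hcon
  have hxS : x ∉ S := by
    intro hmem
    have := hcon x hmem
    rw [dist_self] at this
    linarith
  have hS'1 : ↑(insert x S) ⊆ Metric.closedBall o R := by
    rw [Finset.coe_insert]
    exact insert_subset hx hS1
  have hS'2 : ((insert x S : Finset M) : Set M).Pairwise fun p q => s ≤ dist p q := by
    rw [Finset.coe_insert]
    intro p hp q hq hpq
    rcases hp with rfl | hp <;> rcases hq with rfl | hq
    · exact absurd rfl hpq
    · exact hcon q hq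
    · rw [dist_comm]; exact hcon p hp
    · exact hS2 hp hq hpq
  have hcard' : (insert x S).card = sSup 𝒞 + 1 := by
    rw [Finset.card_insert_of_notMem hxS, hScard]
  have : sSup 𝒞 + 1 ∈ 𝒞 := ⟨insert x S, hS'1, hS'2, hcard'⟩
  have := le_csSup hbdd this
  omega


/-! ### Measure lemmas -/
variable {M : Type*} [MetricSpace M]

theorem ball_eq [MeasurableSpace M] [BorelSpace M] (m : Measure M)
    (hinv : ∀ f : M ≃ᵢ M, Measure.map (⇑f) m = m)
    (hhom : ∀ x y : M, ∃ f : M ≃ᵢ M, f x = y) (o p : M) (r : ℝ) :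
    m (Metric.ball p r) = m (Metric.ball o r) := by
  obtain ⟨f, hf⟩ := hhom o p
  have h1 : Measure.map (⇑f) m = m := hinv f
  have h2 : f.symm p = o := by rw [IsometryEquiv.symm_apply_eq]; exact hf.symm
  calc m (Metric.ball p r) = (Measure.map (⇑f) m) (Metric.ball p r) := by rw [h1]
    _ = m (⇑f ⁻¹' Metric.ball p r) :=
        Measure.map_apply f.continuous.measurable Metric.isOpen_ball.measurableSet
    _ = m (Metric.ball o r) := by rw [f.preimage_ball, h2]

theorem ball_pos [MeasurableSpace M] [BorelSpace M] (m : Measure M) (hm0 : m ≠ 0)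
    (T : ℕ → Set M) (hTc : ∀ n, IsCompact (T n)) (hTu : (⋃ n, T n) = univ)
    (o : M) {r : ℝ} (hr : 0 < r)
    (hballeq : ∀ p : M, m (Metric.ball p r) = m (Metric.ball o r)) :
    0 < m (Metric.ball o r) := by
  by_contra h
  have h0 : m (Metric.ball o r) = 0 := by simpa [pos_iff_ne_zero] using h
  have hTn : ∀ n, m (T n) = 0 := by
    intro n
    obtain ⟨t, _, ht⟩ := (hTc n).elim_nhds_subcover (fun z => Metric.ball z r)
      (fun z _ => Metric.ball_mem_nhds z hr)
    have h1 : m (T n) ≤ ∑ z ∈ t, m (Metric.ball z r) :=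
      (measure_mono ht).trans (measure_biUnion_finset_le _ _)
    rw [Finset.sum_congr rfl (fun z _ => (hballeq z).trans h0), Finset.sum_const,
      smul_zero] at h1
    exact le_zero_iff.1 h1
  have huniv : m univ = 0 := by
    rw [← hTu]
    refine le_antisymm ((measure_iUnion_le T).trans ?_) zero_le
    simp [hTn]
  exact hm0 (Measure.measure_univ_eq_zero.1 huniv)

theorem grp_bound {Γ : Type*} [Group Γ] [TopologicalSpace Γ] [MeasurableSpace Γ]
    [BorelSpace Γ] [IsTopologicalGroup Γ]
    (μ : Measure Γ) [μ.IsMulLeftInvariant] (π : Γ →* (M ≃ᵢ M)) (o : M)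
    {ε : ℝ} (hε : 0 < ε) (n : ℕ)
    (P : Finset M) (hcov : ∀ x ∈ Metric.closedBall o (n * (ε / 2)), ∃ p ∈ P, dist x p < ε / 4) :
    μ ({γ : Γ | dist ((π γ) o) o ≤ ε / 2} ^ n) ≤
      P.card * μ {γ : Γ | dist ((π γ) o) o ≤ ε / 2} := by
  set U := {γ : Γ | dist ((π γ) o) o ≤ ε / 2} with hUdef
  have hUn : ∀ k : ℕ, ∀ γ ∈ U ^ k, dist ((π γ) o) o ≤ k * (ε / 2) := by
    intro k
    induction k with
    | zero =>
        intro γ hγ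
        rw [pow_zero] at hγ
        rw [Set.mem_one] at hγ
        subst hγ
        simp
    | succ k ih =>
        intro γ hγ
        rw [pow_succ] at hγ
        obtain ⟨a, ha, b, hb, rfl⟩ := hγ
        have h1 : (π (a * b)) o = (π a) ((π b) o) := by rw [map_mul]; rfl
        have h2 : dist ((π a) ((π b) o)) ((π a) o) = dist ((π b) o) o := (π a).dist_eq _ _
        have h3 := ih a ha
        have h4 : dist ((π b) o) o ≤ ε / 2 := hb
        calc dist ((π (a * b)) o) o
            ≤ dist ((π (a * b)) o) ((π a) o) + dist ((π a) o) o := dist_triangle _ _ _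
          _ = dist ((π b) o) o + dist ((π a) o) o := by rw [h1, h2]
          _ ≤ ε / 2 + k * (ε / 2) := add_le_add h4 h3
          _ = (k + 1 : ℕ) * (ε / 2) := by push_cast; ring
  have hWsub : U ^ n ⊆ ⋃ p ∈ P, {γ : Γ | dist ((π γ) o) p < ε / 4} := by
    intro γ hγ
    obtain ⟨p, hp, hd⟩ := hcov ((π γ) o) (Metric.mem_closedBall.2 (hUn n γ hγ))
    exact mem_iUnion₂.2 ⟨p, hp, hd⟩
  have hWle : ∀ p : M, μ {γ : Γ | dist ((π γ) o) p < ε / 4} ≤ μ U := by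
    intro p
    rcases Set.eq_empty_or_nonempty {γ : Γ | dist ((π γ) o) p < ε / 4} with he | ⟨γ₀, hγ₀⟩
    · rw [he]; simp
    · have hsub : {γ : Γ | dist ((π γ) o) p < ε / 4} ⊆ (fun γ => γ₀⁻¹ * γ) ⁻¹' U := by
        intro γ hγ
        show γ₀⁻¹ * γ ∈ U
        have h1 : (π (γ₀⁻¹ * γ)) o = (π γ₀)⁻¹ ((π γ) o) := by
          rw [map_mul, map_inv]; rfl
        have h2 : dist ((π γ₀)⁻¹ ((π γ) o)) o = dist ((π γ) o) ((π γ₀) o) := by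
          rw [← (π γ₀).dist_eq ((π γ₀)⁻¹ ((π γ) o)) o, IsometryEquiv.apply_inv_self]
        show dist ((π (γ₀⁻¹ * γ)) o) o ≤ ε / 2
        rw [h1, h2]
        have h3 : dist ((π γ) o) p < ε / 4 := hγ
        have h4 : dist ((π γ₀) o) p < ε / 4 := hγ₀
        calc dist ((π γ) o) ((π γ₀) o)
            ≤ dist ((π γ) o) p + dist p ((π γ₀) o) := dist_triangle _ _ _
          _ ≤ ε / 4 + ε / 4 := by rw [dist_comm p]; exact add_le_add h3.le h4.le
          _ = ε / 2 := by ring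
      calc μ {γ : Γ | dist ((π γ) o) p < ε / 4} ≤ μ ((fun γ => γ₀⁻¹ * γ) ⁻¹' U) :=
            measure_mono hsub
        _ = μ U := measure_preimage_mul μ γ₀⁻¹ U
  calc μ (U ^ n) ≤ μ (⋃ p ∈ P, {γ : Γ | dist ((π γ) o) p < ε / 4}) := measure_mono hWsub
    _ ≤ ∑ p ∈ P, μ {γ : Γ | dist ((π γ) o) p < ε / 4} := measure_biUnion_finset_le _ _
    _ ≤ ∑ _p ∈ P, μ U := Finset.sum_le_sum fun p _ => hWle p
    _ = P.card * μ U := by rw [Finset.sum_const, nsmul_eq_mul]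

theorem final_bound {c K A T : ℝ≥0∞} {card : ℕ}
    (h1 : T ≤ card * K) (h2 : (card : ℝ≥0∞) * c ≤ A)
    (hc0 : c ≠ 0) (hcfin : c ≠ ⊤) (hK : K ≠ ⊤) {a : ℝ} (ha : 0 ≤ a)
    (hA : A ≤ ENNReal.ofReal a) :
    T ≤ ENNReal.ofReal (a * ((K / c).toReal + 1)) := by
  have hcard : (card : ℝ≥0∞) ≤ A / c := (ENNReal.le_div_iff_mul_le (Or.inl hc0)
    (Or.inl hcfin)).2 h2
  have h3 : T ≤ A / c * K := h1.trans (mul_le_mul_left hcard K)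
  have h4 : A / c * K = A * (K / c) := by
    rw [div_eq_mul_inv, div_eq_mul_inv]; ring
  have h5 : K / c ≠ ⊤ := (ENNReal.div_lt_top hK hc0).ne
  have h6 : K / c ≤ ENNReal.ofReal ((K / c).toReal + 1) := by
    calc K / c = ENNReal.ofReal ((K / c).toReal) := (ENNReal.ofReal_toReal h5).symm
      _ ≤ ENNReal.ofReal ((K / c).toReal + 1) := ENNReal.ofReal_le_ofReal (by linarith)
  calc T ≤ A * (K / c) := by rw [← h4]; exact h3
    _ ≤ ENNReal.ofReal a * ENNReal.ofReal ((K / c).toReal + 1) := mul_le_mul' hA h6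
    _ = ENNReal.ofReal (a * ((K / c).toReal + 1)) := (ENNReal.ofReal_mul ha).symm

theorem group_poly_bound [MeasurableSpace M] [BorelSpace M]
    {Γ : Type*} [Group Γ] [TopologicalSpace Γ] [MeasurableSpace Γ] [BorelSpace Γ]
    [IsTopologicalGroup Γ]
    (μ : Measure Γ) [μ.IsMulLeftInvariant] (π : Γ →* (M ≃ᵢ M)) (o : M)
    (m : Measure M) {ε : ℝ} (hε : 0 < ε)
    (hballeq : ∀ p : M, m (Metric.ball p (ε / 4 / 2)) = m (Metric.ball o (ε / 4 / 2)))
    (hc0 : m (Metric.ball o (ε / 4 / 2)) ≠ 0) (hcfin : m (Metric.ball o (ε / 4 / 2)) ≠ ⊤)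
    (hμU : μ {γ : Γ | dist ((π γ) o) o ≤ ε / 2} ≠ ⊤)
    {C₁ Q' : ℝ} (hC₁ : 0 ≤ C₁)
    (hA : ∀ n : ℕ, 0 < n →
      m (Metric.ball o ((n : ℝ) * (ε / 2) + ε / 4)) ≤ ENNReal.ofReal (C₁ * (n : ℝ) ^ Q')) :
    ∃ C' : ℝ, ∀ n : ℕ, 0 < n →
      μ ({γ : Γ | dist ((π γ) o) o ≤ ε / 2} ^ n) ≤ ENNReal.ofReal (C' * (n : ℝ) ^ Q') := by
  set U := {γ : Γ | dist ((π γ) o) o ≤ ε / 2} with hU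
  set c := m (Metric.ball o (ε / 4 / 2)) with hc
  set K := μ U with hK
  refine ⟨C₁ * ((K / c).toReal + 1), fun n hn => ?_⟩
  have hn1 : (1 : ℝ) ≤ (n : ℝ) := by exact_mod_cast hn
  have hfin' : m (Metric.ball o ((n : ℝ) * (ε / 2) + ε / 4)) < ⊤ :=
    lt_of_le_of_lt (hA n hn) ENNReal.ofReal_lt_top
  obtain ⟨P, hPcov, hPcard⟩ := exists_net m o (s := ε / 4) (R := (n : ℝ) * (ε / 2))
    (by linarith) (by positivity) hballeq hfin' (pos_iff_ne_zero.2 hc0)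
  have h1 : μ (U ^ n) ≤ P.card * μ U := grp_bound μ π o hε n P hPcov
  have h2 : (P.card : ℝ≥0∞) * c ≤ m (Metric.ball o ((n : ℝ) * (ε / 2) + ε / 4)) := hPcard
  have h3 := final_bound h1 h2 hc0 hcfin hμU
    (a := C₁ * (n : ℝ) ^ Q') (by positivity) (hA n hn)
  calc μ (U ^ n) ≤ ENNReal.ofReal (C₁ * (n : ℝ) ^ Q' * ((K / c).toReal + 1)) := h3
    _ = ENNReal.ofReal (C₁ * ((K / c).toReal + 1) * (n : ℝ) ^ Q') := by ring_nf

end Stmt19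

open Pointwise MeasureTheory

/-- A homogeneous metric space has polynomial growth: some nonzero
isometry-invariant Radon measure satisfies `m(B(o,r)) ≤ C·r^Q` for all
sufficiently large `r`. -/
def MetricPolynomialGrowth (M : Type*) [MetricSpace M] [MeasurableSpace M] : Prop :=
  ∃ m : MeasureTheory.Measure M, m ≠ 0 ∧
    (∀ s : Set M, IsCompact s → m s < ⊤) ∧
    (∀ f : M ≃ᵢ M, MeasureTheory.Measure.map (⇑f) m = m) ∧
    ∃ (C Q R₀ : ℝ) (o : M), ∀ r : ℝ, R₀ ≤ r →
      m (Metric.ball o r) ≤ ENNReal.ofReal (C * r ^ Q)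

/-- A locally compact group has polynomial growth: some (left) Haar measure,
some compact generating neighbourhood `U` of the identity, and constants
`C`, `Q` with `μ(Uⁿ) ≤ C·n^Q` for all positive `n`. -/
def HasPolynomialGrowth (G : Type*) [Group G] [TopologicalSpace G] [MeasurableSpace G] : Prop :=
  ∃ (μ : MeasureTheory.Measure G) (U : Set G),
    μ.IsHaarMeasure ∧ IsCompact U ∧ U ∈ nhds (1 : G) ∧
    Subgroup.closure U = ⊤ ∧
    ∃ C Q : ℝ, ∀ n : ℕ, 0 < n → μ (U ^ n) ≤ ENNReal.ofReal (C * (n : ℝ) ^ Q)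

/-- if a homogeneous metric space has polynomial growth, then
its isometry group (with the topology of pointwise convergence) and the
identity component thereof have polynomial growth. -/
theorem statement19 (M : Type*) [MetricSpace M] [ConnectedSpace M] [LocallyCompactSpace M]
    [MeasurableSpace M] [BorelSpace M]
    (hhom : ∀ x y : M, ∃ f : M ≃ᵢ M, f x = y)
    (hgrowth : MetricPolynomialGrowth M) :
    letI : TopologicalSpace (M ≃ᵢ M) := TopologicalSpace.induced (fun f : M ≃ᵢ M => (⇑f : M → M)) Pi.topologicalSpace
    letI : MeasurableSpace (M ≃ᵢ M) := borel (M ≃ᵢ M)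
    HasPolynomialGrowth (M ≃ᵢ M) ∧
      ∃ H : Subgroup (M ≃ᵢ M), (H : Set (M ≃ᵢ M)) = connectedComponent (1 : M ≃ᵢ M) ∧
        (letI : MeasurableSpace H := borel H
         HasPolynomialGrowth H) := by
  classical
  obtain ⟨m, hm0, hmc, hminv, C, Q, R₀, o, hgr⟩ := hgrowth
  obtain ⟨ε, hε, hε1, hcomp⟩ : ∃ ε : ℝ, 0 < ε ∧ ε ≤ 1 ∧
      ∀ x : M, IsCompact (Metric.closedBall x ε) := by
    obtain ⟨K, hKc, hKn⟩ := exists_compact_mem_nhds o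
    obtain ⟨δ, hδ, hδK⟩ := Metric.nhds_basis_closedBall.mem_iff.1 hKn
    refine ⟨min δ 1, lt_min hδ one_pos, min_le_right _ _, fun x => ?_⟩
    obtain ⟨f, hf⟩ := hhom o x
    have h1 : IsCompact (Metric.closedBall o (min δ 1)) :=
      hKc.of_isClosed_subset Metric.isClosed_closedBall
        ((Metric.closedBall_subset_closedBall (min_le_left _ _)).trans hδK)
    have h2 : (⇑f) '' Metric.closedBall o (min δ 1) = Metric.closedBall x (min δ 1) := by
      rw [f.image_closedBall, hf]
    rw [← h2]
    exact h1.image f.continuous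
  letI tG : TopologicalSpace (M ≃ᵢ M) := Stmt19.isoTop M
  haveI : IsTopologicalGroup (M ≃ᵢ M) := Stmt19.isoTopologicalGroup
  haveI : T2Space (M ≃ᵢ M) := Stmt19.isoT2
  letI mG : MeasurableSpace (M ≃ᵢ M) := borel (M ≃ᵢ M)
  haveI : BorelSpace (M ≃ᵢ M) := ⟨rfl⟩
  set V : Set (M ≃ᵢ M) := {g : M ≃ᵢ M | dist (g o) o ≤ ε / 2} with hVdef
  have hVcomp : IsCompact V :=
    Stmt19.isCompact_V o hε (Stmt19.exists_pointwise_bound o hε hcomp)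
  have hVnhds : V ∈ nhds 1 := Stmt19.V_mem_nhds o hε
  have hVgen : Subgroup.closure V = ⊤ := Stmt19.closure_V_eq_top hhom o hε
  have hballeq : ∀ p : M, ∀ r : ℝ, m (Metric.ball p r) = m (Metric.ball o r) :=
    fun p r => Stmt19.ball_eq m hminv hhom o p r
  obtain ⟨T, hTc, hTu⟩ := Stmt19.sigma_compact_cover o hε hcomp
  have hc0' : 0 < m (Metric.ball o (ε / 4 / 2)) :=
    Stmt19.ball_pos m hm0 T hTc hTu o (by linarith) (fun p => hballeq p _)
  have hcfin' : m (Metric.ball o (ε / 4 / 2)) ≠ ⊤ := by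
    refine ((measure_mono ?_).trans_lt (hmc _ (hcomp o))).ne
    intro x hx
    have h3 : dist x o < ε / 4 / 2 := hx
    exact Metric.mem_closedBall.2 (by linarith)
  set D : ℝ := ε + |R₀| + 2 with hD
  have habs := abs_nonneg R₀
  have hD1 : 1 ≤ D := by linarith
  set Q' : ℝ := max Q 0 with hQ'
  set C₁ : ℝ := |C| * D ^ Q' with hC₁def
  have hC₁ : 0 ≤ C₁ := mul_nonneg (abs_nonneg C) (Real.rpow_nonneg (by linarith) _)
  have hA : ∀ n : ℕ, 0 < n → m (Metric.ball o ((n : ℝ) * (ε / 2) + ε / 4)) ≤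
      ENNReal.ofReal (C₁ * (n : ℝ) ^ Q') := by
    intro n hn
    have hn1 : (1 : ℝ) ≤ (n : ℝ) := by exact_mod_cast hn
    have hsub : Metric.ball o ((n : ℝ) * (ε / 2) + ε / 4) ⊆ Metric.ball o ((n : ℝ) * D) :=
      Metric.ball_subset_ball (by nlinarith)
    have hR₀ : R₀ ≤ (n : ℝ) * D := by nlinarith [le_abs_self R₀]
    have hnD1 : (1 : ℝ) ≤ (n : ℝ) * D := by nlinarith
    refine (measure_mono hsub).trans
      ((hgr ((n : ℝ) * D) hR₀).trans (ENNReal.ofReal_le_ofReal ?_))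
    have e1 : C * ((n : ℝ) * D) ^ Q ≤ |C| * ((n : ℝ) * D) ^ Q :=
      mul_le_mul_of_nonneg_right (le_abs_self C) (Real.rpow_nonneg (by nlinarith) Q)
    have e2 : ((n : ℝ) * D) ^ Q ≤ ((n : ℝ) * D) ^ Q' :=
      Real.rpow_le_rpow_of_exponent_le hnD1 (le_max_left _ _)
    have e3 : ((n : ℝ) * D) ^ Q' = (n : ℝ) ^ Q' * D ^ Q' :=
      Real.mul_rpow (by positivity) (by linarith)
    calc C * ((n : ℝ) * D) ^ Q ≤ |C| * ((n : ℝ) * D) ^ Q' :=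
          e1.trans (mul_le_mul_of_nonneg_left e2 (abs_nonneg C))
      _ = C₁ * (n : ℝ) ^ Q' := by rw [e3, hC₁def]; ring
  set K₀ : TopologicalSpace.PositiveCompacts (M ≃ᵢ M) :=
    ⟨⟨V, hVcomp⟩, ⟨1, mem_interior_iff_mem_nhds.2 hVnhds⟩⟩ with hK₀
  set μ : Measure (M ≃ᵢ M) := Measure.haarMeasure K₀ with hμdef
  have hμV : μ V ≠ ⊤ := hVcomp.measure_lt_top.ne
  obtain ⟨C', hC'⟩ := Stmt19.group_poly_bound μ (MonoidHom.id (M ≃ᵢ M)) o m hε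
    (fun p => hballeq p _) hc0'.ne' hcfin' (by exact hμV) hC₁ hA
  constructor
  · exact ⟨μ, V, Measure.isHaarMeasure_haarMeasure K₀, hVcomp, hVnhds, hVgen, C', Q', fun n hn => by exact hC' n hn⟩
  · refine ⟨Subgroup.connectedComponentOfOne (M ≃ᵢ M), rfl, ?_⟩
    set H := Subgroup.connectedComponentOfOne (M ≃ᵢ M) with hH
    letI mH : MeasurableSpace H := borel H
    haveI : BorelSpace H := ⟨rfl⟩
    haveI : ConnectedSpace H := Subtype.connectedSpace isConnected_connectedComponent
    have hHclosed : IsClosed (H : Set (M ≃ᵢ M)) := isClosed_connectedComponent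
    set UH : Set H := ((↑) : H → (M ≃ᵢ M)) ⁻¹' V with hUHdef
    have hUHcomp : IsCompact UH :=
      hHclosed.isClosedEmbedding_subtypeVal.isCompact_preimage hVcomp
    have hUHnhds : UH ∈ nhds (1 : H) :=
      continuous_subtype_val.continuousAt.preimage_mem_nhds (by exact hVnhds)
    have hUHgen : Subgroup.closure UH = ⊤ := by
      have hO : IsOpen ((Subgroup.closure UH : Subgroup H) : Set H) :=
        Subgroup.isOpen_of_mem_nhds _ (mem_of_superset hUHnhds Subgroup.subset_closure)
      have hCl : IsClosed ((Subgroup.closure UH : Subgroup H) : Set H) :=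
        Subgroup.isClosed_of_isOpen _ hO
      have huniv : ((Subgroup.closure UH : Subgroup H) : Set H) = Set.univ :=
        IsClopen.eq_univ ⟨hCl, hO⟩ ⟨1, SetLike.mem_coe.2 (Subgroup.one_mem _)⟩
      exact Subgroup.coe_eq_univ.1 huniv
    set KH : TopologicalSpace.PositiveCompacts H :=
      ⟨⟨UH, hUHcomp⟩, ⟨1, mem_interior_iff_mem_nhds.2 hUHnhds⟩⟩ with hKH
    set μH : Measure H := Measure.haarMeasure KH with hμH
    have hμUH : μH UH ≠ ⊤ := hUHcomp.measure_lt_top.ne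
    obtain ⟨C'', hC''⟩ := Stmt19.group_poly_bound μH H.subtype o m hε
      (fun p => hballeq p _) hc0'.ne' hcfin' (by exact hμUH) hC₁ hA
    exact ⟨μH, UH, Measure.isHaarMeasure_haarMeasure KH, hUHcomp, hUHnhds, hUHgen, C'', Q',
      fun n hn => by exact hC'' n hn⟩
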